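/- Let T ≥ 1 be a natural number, v ∈ [0,1], M_v > 0, and set ε := T^{−(1+v)/2} and γ := M_v^{2/(1+v)}·T^{(1−v)/2}. Let d : ℝ^p → ℝ be a differentiable 1-strongly convex function with Bregman distance ξ, with x_0 a minimizer of d, let h : ℝ^p → ℝ be convex, and for each t = 0,…,T let g_t : ℝ^p → ℝ be convex and differentiable with Hölder continuous gradient of exponent v and constant at most M_v. Define φ_0(x) := ξ(x_0, x) and φ_{t+1}(x) := φ_t(x) + (1/(2γ))·[g_t(x_t) + ⟨∇g_t(x_t), x − x_t⟩ + h(x)], let x_{t+1} be a minimizer of φ_{t+1}, and let y_t be a minimizer over x of g_t(x_t) + ⟨∇g_t(x_t), x − x_t⟩ + 2γ·ξ(x_t, x) + h(x). Then for every x* ∈ ℝ^p, ∑_{t=0}^{T} [(g_t(y_t) + h(y_t)) − (g_t(x*) + h(x*))] ≤ (1/2)·T^{−(1+v)/2}·(T+1) + 2·ξ(x_0, x*)·M_v^{2/(1+v)}·T^{(1−v)/2}; in particular the regret is O(T^{(1−v)/2}). -/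

import Mathlib

open scoped InnerProductSpace
open Real Set Filter Topology

section UDGMhelpers
variable {p : ℕ}
local notation "E" => EuclideanSpace ℝ (Fin p)



lemma grad_line_deriv (f : E → ℝ) (x u : E) (hf : DifferentiableAt ℝ f x) :
    HasDerivAt (fun s : ℝ => f (x + s • u)) ⟪gradient f x, u⟫_ℝ 0 := by
  have hF : HasFDerivAt f (InnerProductSpace.toDual ℝ E (gradient f x)) x :=
    hasGradientAt_iff_hasFDerivAt.mp hf.hasGradientAt
  have hline : HasDerivAt (fun s : ℝ => x + s • u) u 0 := by
    simpa using ((hasDerivAt_id (0:ℝ)).smul_const u).const_add x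
  have hF0 : HasFDerivAt f (InnerProductSpace.toDual ℝ E (gradient f x)) (x + (0:ℝ) • u) := by
    simpa using hF
  have := hF0.comp_hasDerivAt (0:ℝ) hline
  rw [InnerProductSpace.toDual_apply_apply] at this
  exact this


lemma le_dirDeriv (f : E → ℝ) (x u : E) (hf : DifferentiableAt ℝ f x) (K : ℝ)
    (hK : ∀ s : ℝ, s ∈ Ioc (0:ℝ) 1 → f x + s * K ≤ f (x + s • u)) :
    K ≤ ⟪gradient f x, u⟫_ℝ := by
  have hD := grad_line_deriv f x u hf
  have hslope : Tendsto (slope (fun s : ℝ => f (x + s • u)) 0) (𝓝[>] (0:ℝ))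
      (𝓝 ⟪gradient f x, u⟫_ℝ) :=
    (hasDerivAt_iff_tendsto_slope.mp hD).mono_left
      (nhdsWithin_mono _ (fun s hs => ne_of_gt hs))
  refine ge_of_tendsto hslope ?_
  filter_upwards [Ioc_mem_nhdsGT_of_mem (by simp : (0:ℝ) ∈ Ico (0:ℝ) 1)] with s hs
  have h1 := hK s hs
  have hs0 : (0:ℝ) < s := hs.1
  rw [slope_def_field]
  simp only [sub_zero, zero_smul, add_zero]
  rw [le_div_iff₀ hs0]
  nlinarith [h1]

lemma dirDeriv_le (f : E → ℝ) (x u : E) (hf : DifferentiableAt ℝ f x) (K : ℝ)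
    (hK : ∀ s : ℝ, s ∈ Ioc (0:ℝ) 1 → f (x + s • u) ≤ f x + s * K) :
    ⟪gradient f x, u⟫_ℝ ≤ K := by
  have hD := grad_line_deriv f x u hf
  have hslope : Tendsto (slope (fun s : ℝ => f (x + s • u)) 0) (𝓝[>] (0:ℝ))
      (𝓝 ⟪gradient f x, u⟫_ℝ) :=
    (hasDerivAt_iff_tendsto_slope.mp hD).mono_left
      (nhdsWithin_mono _ (fun s hs => ne_of_gt hs))
  refine le_of_tendsto hslope ?_
  filter_upwards [Ioc_mem_nhdsGT_of_mem (by simp : (0:ℝ) ∈ Ico (0:ℝ) 1)] with s hs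
  have h1 := hK s hs
  have hs0 : (0:ℝ) < s := hs.1
  rw [slope_def_field]
  simp only [sub_zero, zero_smul, add_zero]
  rw [div_le_iff₀ hs0]
  nlinarith [h1]

lemma convex_grad_le (f : E → ℝ) (hconv : ConvexOn ℝ Set.univ f) (hf : Differentiable ℝ f)
    (x z : E) : f x + ⟪gradient f x, z - x⟫_ℝ ≤ f z := by
  have := dirDeriv_le f x (z - x) (hf x) (f z - f x) ?_
  · linarith
  · intro s hs
    have h1 : x + s • (z - x) = (1 - s) • x + s • z := by module
    have h2 := hconv.2 (Set.mem_univ x) (Set.mem_univ z)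
      (by linarith [hs.2] : (0:ℝ) ≤ 1 - s) (le_of_lt hs.1) (by ring)
    rw [h1]
    calc f ((1 - s) • x + s • z) ≤ (1 - s) * f x + s * f z := h2
    _ = f x + s * (f z - f x) := by ring


lemma grad_line_deriv' (f : E → ℝ) (x u : E) (hf : Differentiable ℝ f) (s : ℝ) :
    HasDerivAt (fun r : ℝ => f (x + r • u)) ⟪gradient f (x + s • u), u⟫_ℝ s := by
  have hF : HasFDerivAt f (InnerProductSpace.toDual ℝ E (gradient f (x + s • u))) (x + s • u) :=
    hasGradientAt_iff_hasFDerivAt.mp (hf _).hasGradientAt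
  have hline : HasDerivAt (fun r : ℝ => x + r • u) u s := by
    simpa using ((hasDerivAt_id (s:ℝ)).smul_const u).const_add x
  have := hF.comp_hasDerivAt s hline
  rw [InnerProductSpace.toDual_apply_apply] at this
  exact this

lemma holder_ub (g : E → ℝ) (hg : Differentiable ℝ g) (M v : ℝ) (hv0 : 0 ≤ v) (hM : 0 ≤ M)
    (hH : ∀ a b : E, ‖gradient g a - gradient g b‖ ≤ M * ‖a - b‖ ^ v) (x z : E) :
    g z ≤ g x + ⟪gradient g x, z - x⟫_ℝ + M * ‖z - x‖ ^ (1 + v) := by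
  by_cases hzx : z = x
  · subst hzx
    simp [Real.zero_rpow (show (1:ℝ) + v ≠ 0 by positivity)]
  · set u := z - x with hu_def
    have hu : 0 < ‖u‖ := by
      simp only [hu_def, norm_pos_iff, sub_ne_zero]
      exact hzx
    have hcont : ContinuousOn (fun s : ℝ => g (x + s • u)) (Set.Icc 0 1) :=
      (hg.continuous.comp (by continuity)).continuousOn
    obtain ⟨c, hc, hceq⟩ := exists_hasDerivAt_eq_slope (fun s : ℝ => g (x + s • u))
      (fun s => ⟪gradient g (x + s • u), u⟫_ℝ) one_pos hcont
      (fun s _ => grad_line_deriv' g x u hg s)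
    have h1 : x + (1:ℝ) • u = z := by simp [hu_def]
    have h0 : x + (0:ℝ) • u = x := by simp
    rw [h1, h0] at hceq
    simp only [sub_zero, div_one] at hceq
    have hsub : ⟪gradient g (x + c • u), u⟫_ℝ - ⟪gradient g x, u⟫_ℝ
        = ⟪gradient g (x + c • u) - gradient g x, u⟫_ℝ := by
      rw [inner_sub_left]
    have hb1 : ⟪gradient g (x + c • u) - gradient g x, u⟫_ℝ
        ≤ ‖gradient g (x + c • u) - gradient g x‖ * ‖u‖ := real_inner_le_norm _ _
    have hb2 : ‖gradient g (x + c • u) - gradient g x‖ ≤ M * ‖c • u‖ ^ v := by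
      have := hH (x + c • u) x
      simpa using this
    have hnorm : ‖c • u‖ = c * ‖u‖ := by
      rw [norm_smul, Real.norm_eq_abs, abs_of_pos hc.1]
    have hb3 : (c * ‖u‖) ^ v ≤ ‖u‖ ^ v := by
      apply Real.rpow_le_rpow (mul_nonneg hc.1.le (norm_nonneg _)) _ hv0
      nlinarith [hc.2.le, hu]
    have hb4 : M * ‖u‖ ^ v * ‖u‖ = M * ‖u‖ ^ (1 + v) := by
      rw [Real.rpow_add hu, Real.rpow_one]; ring
    have : g z - g x - ⟪gradient g x, u⟫_ℝ ≤ M * ‖u‖ ^ (1 + v) := by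
      rw [← hceq] at *
      calc ⟪gradient g (x + c • u), u⟫_ℝ - ⟪gradient g x, u⟫_ℝ
          ≤ ‖gradient g (x + c • u) - gradient g x‖ * ‖u‖ := by rw [hsub]; exact hb1
        _ ≤ (M * ‖c • u‖ ^ v) * ‖u‖ := by
            apply mul_le_mul_of_nonneg_right hb2 (norm_nonneg _)
        _ ≤ (M * ‖u‖ ^ v) * ‖u‖ := by
            rw [hnorm]
            apply mul_le_mul_of_nonneg_right _ (norm_nonneg _)
            exact mul_le_mul_of_nonneg_left hb3 hM
        _ = M * ‖u‖ ^ (1 + v) := hb4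
    linarith

lemma key_ineq (T v M : ℝ) (hT : 1 ≤ T) (hv0 : 0 ≤ v) (hv1 : v ≤ 1) (hM : 0 < M)
    (r : ℝ) (hr : 0 ≤ r) :
    M * r ^ (1 + v) ≤ (M ^ (2 / (1 + v)) * T ^ ((1 - v) / 2)) * r ^ 2
      + T ^ (-(1 + v) / 2) / 2 := by
  have hT0 : (0:ℝ) < T := lt_of_lt_of_le one_pos hT
  have h1v : (0:ℝ) < 1 + v := by linarith
  set A : ℝ := M ^ ((1:ℝ) / (1 + v)) * T ^ ((1:ℝ)/2) with hA_def
  have hA0 : 0 < A := by positivity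
  set ρ : ℝ := A * r with hρ_def
  have hρ0 : 0 ≤ ρ := by positivity
  have step1 : ρ ^ (1 + v) ≤ ρ ^ 2 + 1/2 := by
    rcases le_or_gt ρ 1 with hρ1 | hρ1
    · rcases eq_or_lt_of_le hρ0 with hz | hz
      · rw [← hz, Real.zero_rpow (by positivity)]
        positivity
      · have : ρ ^ (1 + v) ≤ ρ ^ (1:ℝ) := Real.rpow_le_rpow_of_exponent_ge hz hρ1 (by linarith)
        rw [Real.rpow_one] at this
        nlinarith
    · have h2 : ρ ^ (1 + v) ≤ ρ ^ (2:ℝ) :=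
        Real.rpow_le_rpow_of_exponent_le hρ1.le (by linarith)
      rw [show (2:ℝ) = ((2:ℕ):ℝ) by norm_num, Real.rpow_natCast] at h2
      linarith
  have hA1v : A ^ (1 + v) = M * T ^ ((1 + v) / 2) := by
    rw [hA_def, Real.mul_rpow (by positivity) (by positivity),
      ← Real.rpow_mul hM.le, ← Real.rpow_mul hT0.le]
    rw [show (1:ℝ) / (1 + v) * (1 + v) = 1 by field_simp, Real.rpow_one]
    ring_nf
  have hA2 : A ^ 2 = M ^ (2 / (1 + v)) * T := by
    rw [hA_def, mul_pow, ← Real.rpow_natCast (M ^ ((1:ℝ)/(1+v))) 2,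
      ← Real.rpow_natCast (T ^ ((1:ℝ)/2)) 2,
      ← Real.rpow_mul hM.le, ← Real.rpow_mul hT0.le]
    push_cast
    rw [show (1:ℝ) / (1 + v) * 2 = 2 / (1 + v) by ring,
      show (1:ℝ) / 2 * 2 = 1 by ring, Real.rpow_one]
  have h0 : T ^ (-(1 + v) / 2) * T ^ ((1 + v) / 2) = 1 := by
    rw [← Real.rpow_add hT0, show -(1 + v) / 2 + (1 + v) / 2 = 0 by ring, Real.rpow_zero]
  have eq1 : M * r ^ (1 + v) = T ^ (-(1 + v) / 2) * ρ ^ (1 + v) := by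
    rw [hρ_def, Real.mul_rpow hA0.le hr, hA1v]
    linear_combination (-(M * r ^ (1 + v))) * h0
  have h1 : T ^ (-(1 + v) / 2) * T = T ^ ((1 - v) / 2) := by
    nth_rewrite 2 [show T = T ^ (1:ℝ) by rw [Real.rpow_one]]
    rw [← Real.rpow_add hT0]
    ring_nf
  have eq2 : (M ^ (2 / (1 + v)) * T ^ ((1 - v) / 2)) * r ^ 2
      = T ^ (-(1 + v) / 2) * ρ ^ 2 := by
    rw [hρ_def, mul_pow, hA2]
    linear_combination (-(M ^ (2 / (1 + v)) * r ^ 2)) * h1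
  have hε0 : (0:ℝ) < T ^ (-(1 + v) / 2) := Real.rpow_pos_of_pos hT0 _
  rw [eq1, eq2]
  nlinarith [mul_le_mul_of_nonneg_left step1 hε0.le]



lemma affine_convexOn (a : ℝ) (w : E) :
    ConvexOn ℝ Set.univ (fun z : E => a + ⟪w, z⟫_ℝ) := by
  refine ⟨convex_univ, ?_⟩
  intro u _ z _ s t hs ht hst
  simp only [inner_add_right, real_inner_smul_right, smul_eq_mul]
  have h' : s * a + t * a = a := by rw [← add_mul, hst, one_mul]
  linarith


lemma bregman_opt (d : E → ℝ) (hd : Differentiable ℝ d) (c : E → ℝ)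
    (hc : ConvexOn ℝ Set.univ c) (xs : E) (hmin : ∀ z, d xs + c xs ≤ d z + c z) (z : E) :
    0 ≤ c z - c xs + ⟪gradient d xs, z - xs⟫_ℝ := by
  have H := le_dirDeriv d xs (z - xs) (hd xs) (c xs - c z) ?_
  · linarith
  · intro s hs
    have h1 : xs + s • (z - xs) = (1 - s) • xs + s • z := by module
    have h2 := hc.2 (Set.mem_univ xs) (Set.mem_univ z)
      (by linarith [hs.2] : (0:ℝ) ≤ 1 - s) hs.1.le (by ring)
    have h3 := hmin ((1 - s) • xs + s • z)
    rw [h1]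
    simp only [smul_eq_mul] at h2
    linarith


end UDGMhelpers

theorem statement13 {p : ℕ} (T : ℕ) (hT : 1 ≤ T) (ε v Mv γ : ℝ)
    (hv0 : 0 ≤ v) (hv1 : v ≤ 1) (hMv : 0 < Mv)
    (hε : ε = (T : ℝ) ^ (-(1 + v) / 2))
    (hγ : γ = Mv ^ (2 / (1 + v)) * (T : ℝ) ^ ((1 - v) / 2))
    (d : EuclideanSpace ℝ (Fin p) → ℝ) (hd : Differentiable ℝ d)
    (hdsc : ∀ x y : EuclideanSpace ℝ (Fin p),
      d x + ⟪gradient d x, y - x⟫_ℝ + 1 / 2 * ‖y - x‖ ^ 2 ≤ d y)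
    (xi : EuclideanSpace ℝ (Fin p) → EuclideanSpace ℝ (Fin p) → ℝ)
    (hxi : ∀ x y : EuclideanSpace ℝ (Fin p), xi x y = d y - d x - ⟪gradient d x, y - x⟫_ℝ)
    (h : EuclideanSpace ℝ (Fin p) → ℝ) (hh : ConvexOn ℝ Set.univ h)
    (g : ℕ → EuclideanSpace ℝ (Fin p) → ℝ)
    (hgconv : ∀ t ≤ T, ConvexOn ℝ Set.univ (g t))
    (hgdiff : ∀ t ≤ T, Differentiable ℝ (g t))
    (hHolder : ∀ t ≤ T, ∀ x y : EuclideanSpace ℝ (Fin p),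
      ‖gradient (g t) x - gradient (g t) y‖ ≤ Mv * ‖x - y‖ ^ v)
    (x : ℕ → EuclideanSpace ℝ (Fin p))
    (hx0 : ∀ z : EuclideanSpace ℝ (Fin p), d (x 0) ≤ d z)
    (φ : ℕ → EuclideanSpace ℝ (Fin p) → ℝ)
    (hφ0 : ∀ z : EuclideanSpace ℝ (Fin p), φ 0 z = xi (x 0) z)
    (hφsucc : ∀ t ≤ T, ∀ z : EuclideanSpace ℝ (Fin p),
      φ (t + 1) z = φ t z
        + 1 / (2 * γ) * (g t (x t) + ⟪gradient (g t) (x t), z - x t⟫_ℝ + h z))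
    (hxmin : ∀ t ≤ T, ∀ z : EuclideanSpace ℝ (Fin p), φ (t + 1) (x (t + 1)) ≤ φ (t + 1) z)
    (y : ℕ → EuclideanSpace ℝ (Fin p))
    (hymin : ∀ t ≤ T, ∀ z : EuclideanSpace ℝ (Fin p),
      g t (x t) + ⟪gradient (g t) (x t), y t - x t⟫_ℝ + 2 * γ * xi (x t) (y t) + h (y t)
        ≤ g t (x t) + ⟪gradient (g t) (x t), z - x t⟫_ℝ + 2 * γ * xi (x t) z + h z) :
    ∀ xstar : EuclideanSpace ℝ (Fin p),
      ∑ t ∈ Finset.range (T + 1), ((g t (y t) + h (y t)) - (g t xstar + h xstar))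
        ≤ 1 / 2 * (T : ℝ) ^ (-(1 + v) / 2) * (T + 1)
          + 2 * xi (x 0) xstar * Mv ^ (2 / (1 + v)) * (T : ℝ) ^ ((1 - v) / 2) := by
  intro xstar
  have hT1 : (1:ℝ) ≤ (T:ℝ) := by exact_mod_cast hT
  have hT0 : (0:ℝ) < (T:ℝ) := lt_of_lt_of_le one_pos hT1
  have hγ0 : 0 < γ := by rw [hγ]; positivity
  have hβ0 : (0:ℝ) < 1/(2*γ) := by positivity
  -- convexity of φ t - d
  have hconvc : ∀ t, t ≤ T + 1 →
      ConvexOn ℝ Set.univ (fun z : EuclideanSpace ℝ (Fin p) => φ t z - d z) := by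
    intro t
    induction t with
    | zero =>
      intro _
      have heq : (fun z : EuclideanSpace ℝ (Fin p) => φ 0 z - d z)
          = (fun z : EuclideanSpace ℝ (Fin p) =>
              (-(d (x 0)) + ⟪gradient d (x 0), x 0⟫_ℝ) + ⟪-(gradient d (x 0)), z⟫_ℝ) := by
        funext z
        rw [hφ0 z, hxi]
        simp only [inner_sub_right, inner_neg_left]
        ring
      rw [heq]
      exact affine_convexOn _ _
    | succ n ih =>
      intro hn
      have hnT : n ≤ T := by omega
      have heq : (fun z : EuclideanSpace ℝ (Fin p) => φ (n+1) z - d z)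
          = (fun z : EuclideanSpace ℝ (Fin p) => ((φ n z - d z)
              + ((1/(2*γ) * (g n (x n)) - 1/(2*γ) * ⟪gradient (g n) (x n), x n⟫_ℝ)
                  + ⟪(1/(2*γ)) • gradient (g n) (x n), z⟫_ℝ))
              + (1/(2*γ)) • h z) := by
        funext z
        rw [hφsucc n hnT z]
        simp only [inner_sub_right, real_inner_smul_left, smul_eq_mul]
        ring
      rw [heq]
      exact ((ih (by omega)).add (affine_convexOn _ _)).add (hh.smul hβ0.le)
  -- min property
  have hminφ : ∀ t ≤ T, ∀ z, φ t (x t) ≤ φ t z := by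
    intro t ht z
    cases t with
    | zero =>
      rw [hφ0, hφ0, hxi, hxi]
      have h1 := hdsc (x 0) z
      have h2 : ⟪gradient d (x 0), x 0 - x 0⟫_ℝ = (0:ℝ) := by simp
      nlinarith [sq_nonneg ‖z - x 0‖]
    | succ n => exact hxmin n (by omega) z
  -- Bregman optimality lower bound
  have hbreg : ∀ t ≤ T, ∀ z, φ t (x t)
      + (d z - d (x t) - ⟪gradient d (x t), z - x t⟫_ℝ) ≤ φ t z := by
    intro t ht z
    have hc := hconvc t (by omega)
    have hB := bregman_opt d hd (fun z => φ t z - d z) hc (x t)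
      (fun z' => by have := hminφ t ht z'; linarith) z
    linarith
  -- per-step inequality
  have hstep : ∀ t ≤ T,
      φ t (x t) + 1/(2*γ) * ((g t (y t) + h (y t)) - ε/2) ≤ φ (t+1) (x (t+1)) := by
    intro t ht
    have e1 := hφsucc t ht (x (t+1))
    have e2 := hbreg t ht (x (t+1))
    rw [← hxi (x t) (x (t+1))] at e2
    have e3 := hymin t ht (x (t+1))
    have e4 : 1/2 * ‖y t - x t‖^2 ≤ xi (x t) (y t) := by
      rw [hxi]; have := hdsc (x t) (y t); linarith
    have e5 : g t (y t) ≤ g t (x t) + ⟪gradient (g t) (x t), y t - x t⟫_ℝ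
        + Mv * ‖y t - x t‖ ^ (1 + v) :=
      holder_ub (g t) (hgdiff t ht) Mv v hv0 hMv.le (hHolder t ht) (x t) (y t)
    have e6 : Mv * ‖y t - x t‖ ^ (1 + v) ≤ γ * ‖y t - x t‖^2 + ε/2 := by
      rw [hε, hγ]
      have := key_ineq (T:ℝ) v Mv hT1 hv0 hv1 hMv ‖y t - x t‖ (norm_nonneg _)
      linarith
    have k1 : 1/(2*γ) * (g t (x t) + ⟪gradient (g t) (x t), x (t+1) - x t⟫_ℝ
          + 2*γ*xi (x t) (x (t+1)) + h (x (t+1)))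
        = 1/(2*γ) * (g t (x t) + ⟪gradient (g t) (x t), x (t+1) - x t⟫_ℝ + h (x (t+1)))
          + xi (x t) (x (t+1)) := by
      field_simp
      ring
    have k2 : 1/(2*γ) * (g t (x t) + ⟪gradient (g t) (x t), y t - x t⟫_ℝ
          + 2*γ*xi (x t) (y t) + h (y t))
        = 1/(2*γ) * (g t (x t) + ⟪gradient (g t) (x t), y t - x t⟫_ℝ + h (y t))
          + xi (x t) (y t) := by
      field_simp
      ring
    have m1 := mul_le_mul_of_nonneg_left e3 hβ0.le
    have hq : (g t (y t) + h (y t)) - ε/2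
        ≤ (g t (x t) + ⟪gradient (g t) (x t), y t - x t⟫_ℝ + h (y t))
          + γ * ‖y t - x t‖^2 := by linarith
    have m2 := mul_le_mul_of_nonneg_left hq hβ0.le
    have hexp : 1/(2*γ) * ((g t (x t) + ⟪gradient (g t) (x t), y t - x t⟫_ℝ + h (y t))
          + γ * ‖y t - x t‖^2)
        = 1/(2*γ) * (g t (x t) + ⟪gradient (g t) (x t), y t - x t⟫_ℝ + h (y t))
          + 1/2 * ‖y t - x t‖^2 := by
      field_simp
    linarith [m1, m2, e1, e2, e4, k1, k2, hexp]
  -- telescoping lower bound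
  have lower : ∀ n, n ≤ T + 1 →
      1/(2*γ) * (∑ t ∈ Finset.range n, ((g t (y t) + h (y t)) - ε/2)) ≤ φ n (x n) := by
    intro n
    induction n with
    | zero =>
      intro _
      simp [hφ0, hxi]
    | succ n ih =>
      intro hn
      have hnT : n ≤ T := by omega
      have h1 := hstep n hnT
      have h2 := ih (by omega)
      rw [Finset.sum_range_succ, mul_add]
      linarith
  -- upper bound via xstar
  have upper : ∀ n, n ≤ T + 1 →
      φ n xstar ≤ xi (x 0) xstar
        + 1/(2*γ) * (∑ t ∈ Finset.range n, (g t xstar + h xstar)) := by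
    intro n
    induction n with
    | zero =>
      intro _
      simp [hφ0]
    | succ n ih =>
      intro hn
      have hnT : n ≤ T := by omega
      have h1 := hφsucc n hnT xstar
      have h2 := convex_grad_le (g n) (hgconv n hnT) (hgdiff n hnT) (x n) xstar
      have h3 := ih (by omega)
      rw [Finset.sum_range_succ, mul_add]
      have h4 := mul_le_mul_of_nonneg_left
        (show g n (x n) + ⟪gradient (g n) (x n), xstar - x n⟫_ℝ + h xstar
          ≤ g n xstar + h xstar by linarith) hβ0.le
      linarith
  -- combine
  have A : 1/(2*γ) * (∑ t ∈ Finset.range (T+1), ((g t (y t) + h (y t)) - ε/2))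
      ≤ φ (T+1) (x (T+1)) := lower (T+1) le_rfl
  have B := upper (T+1) le_rfl
  have C := hxmin T le_rfl xstar
  have D : 1/(2*γ) * (∑ t ∈ Finset.range (T+1), ((g t (y t) + h (y t)) - ε/2))
      ≤ xi (x 0) xstar + 1/(2*γ) * (∑ t ∈ Finset.range (T+1), (g t xstar + h xstar)) :=
    le_trans A (le_trans C B)
  have D2 := mul_le_mul_of_nonneg_left D (by linarith : (0:ℝ) ≤ 2*γ)
  have eL : (2*γ) * (1/(2*γ) * (∑ t ∈ Finset.range (T+1), ((g t (y t) + h (y t)) - ε/2)))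
      = ∑ t ∈ Finset.range (T+1), ((g t (y t) + h (y t)) - ε/2) := by
    field_simp
  have eR : (2*γ) * (xi (x 0) xstar
        + 1/(2*γ) * (∑ t ∈ Finset.range (T+1), (g t xstar + h xstar)))
      = 2*γ*xi (x 0) xstar + ∑ t ∈ Finset.range (T+1), (g t xstar + h xstar) := by
    field_simp
  rw [eL, eR] at D2
  have hsum1 : ∑ t ∈ Finset.range (T+1), ((g t (y t) + h (y t)) - ε/2)
      = (∑ t ∈ Finset.range (T+1), (g t (y t) + h (y t))) - ((T:ℝ)+1)*(ε/2) := by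
    rw [Finset.sum_sub_distrib, Finset.sum_const, Finset.card_range]
    push_cast
    ring
  rw [hsum1] at D2
  have final : (∑ t ∈ Finset.range (T+1), (g t (y t) + h (y t)))
      - (∑ t ∈ Finset.range (T+1), (g t xstar + h xstar))
      ≤ ((T:ℝ)+1)*(ε/2) + 2*γ*xi (x 0) xstar := by linarith
  rw [hε, hγ] at final
  rw [Finset.sum_sub_distrib]
  linarith [final]
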